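/- For a graph G, a vertex u, and a set A of vertices, the odd neighbourhood of A in the local complementation G⋆u satisfies: Odd_{G⋆u}(A) = Odd_G(A) Δ (N_G(u) ∩ A) if u ∉ Odd_G(A), and Odd_{G⋆u}(A) = Odd_G(A) Δ (N_G(u) \ A) if u ∈ Odd_G(A). -/

import Mathlib

open Set

/-- The three measurement planes. -/
inductive MPlane | XY | XZ | YZ
deriving DecidableEq

/-- The odd neighbourhood of a set `K`: vertices with an odd number of neighbours in `K`. -/
def oddNbhd {V : Type*} (G : SimpleGraph V) (K : Set V) : Set V :=
  {u | Odd (K ∩ G.neighborSet u).ncard}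

/-- `(g, prec)` is a gflow for the labelled open graph `(G, I, O, lam)`. -/
structure GFlow {V : Type*} (G : SimpleGraph V) (I O : Set V) (lam : V → MPlane)
    (g : V → Set V) (prec : V → V → Prop) : Prop where
  irrefl : ∀ v, ¬ prec v v
  trans : ∀ u v w, prec u v → prec v w → prec u w
  noInput : ∀ v, v ∉ O → g v ∩ I = ∅
  g1 : ∀ v, v ∉ O → ∀ w ∈ g v, w ≠ v → prec v w
  g2 : ∀ v, v ∉ O → ∀ w ∈ oddNbhd G (g v), w ≠ v → prec v w
  gXY : ∀ v, v ∉ O → lam v = MPlane.XY → v ∉ g v ∧ v ∈ oddNbhd G (g v)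
  gXZ : ∀ v, v ∉ O → lam v = MPlane.XZ → v ∈ g v ∧ v ∈ oddNbhd G (g v)
  gYZ : ∀ v, v ∉ O → lam v = MPlane.YZ → v ∈ g v ∧ v ∉ oddNbhd G (g v)

/-- Local complementation of `G` about the vertex `u`: complement the edges
among the neighbours of `u`. -/
def localComp {V : Type*} (G : SimpleGraph V) (u : V) : SimpleGraph V where
  Adj x y := x ≠ y ∧ Xor' (G.Adj x y) (G.Adj u x ∧ G.Adj u y)
  symm := by
    constructor
    rintro x y ⟨hxy, h⟩
    refine ⟨hxy.symm, ?_⟩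
    rw [G.adj_comm y x, and_comm]
    exact h
  loopless := by constructor; rintro x ⟨h, _⟩; exact h rfl

/-- The pivot of `G` about the edge `u ∼ v`. -/
def pivot {V : Type*} (G : SimpleGraph V) (u v : V) : SimpleGraph V :=
  localComp (localComp (localComp G u) v) u


lemma odd_ncard_symmDiff {α : Type*} {s t : Set α} (hs : s.Finite) (ht : t.Finite) :
    Odd (symmDiff s t).ncard ↔ Xor' (Odd s.ncard) (Odd t.ncard) := by
  have h1 : s = (s \ t) ∪ (s ∩ t) := by ext y; by_cases hy : y ∈ s <;> by_cases hz : y ∈ t <;> simp [hy, hz]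
  have h2 : t = (t \ s) ∪ (s ∩ t) := by ext y; by_cases hy : y ∈ s <;> by_cases hz : y ∈ t <;> simp [hy, hz]
  have e1 : s.ncard = (s \ t).ncard + (s ∩ t).ncard := by
    rw [← Set.ncard_union_eq (by simp [Set.disjoint_left]; tauto) hs.diff (hs.inter_of_left _), ← h1]
  have e2 : t.ncard = (t \ s).ncard + (s ∩ t).ncard := by
    rw [← Set.ncard_union_eq (by simp [Set.disjoint_left]; tauto) ht.diff (hs.inter_of_left _), ← h2]
  have e3 : (symmDiff s t).ncard = (s \ t).ncard + (t \ s).ncard := by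
    rw [Set.symmDiff_def, Set.ncard_union_eq (by simp [Set.disjoint_left]; tauto) hs.diff ht.diff]
  rw [e1, e2, e3, Xor', xor_def]
  simp only [Nat.odd_iff]
  omega

lemma odd_ncard_diff_singleton {α : Type*} {s : Set α} (hs : s.Finite) {x : α} (hx : x ∈ s) :
    Odd (s \ {x}).ncard ↔ ¬ Odd s.ncard := by
  have h : s = insert x (s \ {x}) := by ext y; by_cases hy : y = x <;> simp [hy, hx]
  rw [h, Set.ncard_insert_of_notMem (by simp) (hs.diff)]
  simp [Nat.odd_iff]; omega

lemma nbhd_localComp_adj {V : Type*} (G : SimpleGraph V) {u x : V} (h : G.Adj u x) :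
    (localComp G u).neighborSet x = symmDiff (G.neighborSet x) (G.neighborSet u \ {x}) := by
  ext y
  simp only [SimpleGraph.mem_neighborSet, Set.mem_symmDiff, Set.mem_diff, Set.mem_singleton_iff]
  show (x ≠ y ∧ Xor' (G.Adj x y) (G.Adj u x ∧ G.Adj u y)) ↔ _
  by_cases hyx : y = x
  · subst hyx; simp
  · simp only [Xor', h, true_and, Ne, hyx, not_false_iff, and_true]
    constructor
    · rintro ⟨h1, h2⟩; tauto
    · intro h2
      refine ⟨fun hh => hyx hh.symm, ?_⟩
      tauto

lemma nbhd_localComp_nonadj {V : Type*} (G : SimpleGraph V) {u x : V} (h : ¬ G.Adj u x) :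
    (localComp G u).neighborSet x = G.neighborSet x := by
  ext y
  simp only [SimpleGraph.mem_neighborSet]
  show (x ≠ y ∧ Xor' (G.Adj x y) (G.Adj u x ∧ G.Adj u y)) ↔ _
  by_cases hyx : y = x
  · subst hyx; simp
  · simp [Xor', xor_def, h, Ne, hyx]
    tauto


/-- Lemma B.4 of Backens et al.: the odd neighbourhood of a set `A` after local
complementation about `u`. -/
theorem oddNbhd_localComp {V : Type*} [Fintype V] (G : SimpleGraph V) (u : V) (A : Set V) :
    (u ∉ oddNbhd G A →
      oddNbhd (localComp G u) A = symmDiff (oddNbhd G A) (G.neighborSet u ∩ A)) ∧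
    (u ∈ oddNbhd G A →
      oddNbhd (localComp G u) A = symmDiff (oddNbhd G A) (G.neighborSet u \ A)) := by
  have key : ∀ x, G.Adj u x →
      (x ∈ oddNbhd (localComp G u) A ↔
        Xor' (x ∈ oddNbhd G A) (Odd ((A ∩ G.neighborSet u) \ {x}).ncard)) := by
    intro x hx
    simp only [oddNbhd, Set.mem_setOf_eq]
    rw [nbhd_localComp_adj G hx, Set.inter_symmDiff_distrib_left,
      odd_ncard_symmDiff ((A ∩ G.neighborSet x).toFinite) ((A ∩ (G.neighborSet u \ {x})).toFinite)]
    have : A ∩ (G.neighborSet u \ {x}) = (A ∩ G.neighborSet u) \ {x} := by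
      ext y; simp [Set.mem_diff]; tauto
    rw [this]
  constructor <;> intro hu <;> ext x <;> by_cases hx : G.Adj u x
  · rw [key x hx]
    have hd := odd_ncard_diff_singleton (s := A ∩ G.neighborSet u) (Set.toFinite _) (x := x)
    simp only [oddNbhd, Set.mem_setOf_eq] at hu ⊢
    by_cases hxA : x ∈ A
    · rw [hd ⟨hxA, hx⟩]
      simp [Set.mem_symmDiff, Xor', xor_def, hx, hxA, hu]
    · have : (A ∩ G.neighborSet u) \ {x} = A ∩ G.neighborSet u := by
        ext y; simp; rintro hy _ rfl; exact hxA hy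
      rw [this]
      simp [Set.mem_symmDiff, Xor', xor_def, hx, hxA, hu]
  · rw [Set.mem_symmDiff]
    simp only [oddNbhd, Set.mem_setOf_eq, nbhd_localComp_nonadj G hx, Set.mem_inter_iff,
      SimpleGraph.mem_neighborSet, hx]
    tauto
  · rw [key x hx]
    have hd := odd_ncard_diff_singleton (s := A ∩ G.neighborSet u) (Set.toFinite _) (x := x)
    simp only [oddNbhd, Set.mem_setOf_eq] at hu ⊢
    by_cases hxA : x ∈ A
    · rw [hd ⟨hxA, hx⟩]
      simp [Set.mem_symmDiff, Xor', xor_def, hx, hxA, hu]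
    · have : (A ∩ G.neighborSet u) \ {x} = A ∩ G.neighborSet u := by
        ext y; simp; rintro hy _ rfl; exact hxA hy
      rw [this]
      simp [Set.mem_symmDiff, Xor', xor_def, hx, hxA, hu]
  · rw [Set.mem_symmDiff]
    simp only [oddNbhd, Set.mem_setOf_eq, nbhd_localComp_nonadj G hx, Set.mem_diff,
      SimpleGraph.mem_neighborSet, hx]
    tauto
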